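/- For the complete intersection ideal I = (x₀,…,x₄) in S = k[x₀,…,x₄] with Koszul syzygy matrices: d₂ the 5×10 matrix of Koszul relations among x₀,…,x₄, d₃ a symmetric 10×10 matrix of syzygies of d₂ (as explicitly given), and d₄ = −d₂ᵗ, the wedge composition D₄ = d₂ ∧ d₃ ∧ d₄ equals 6 times the skew-symmetric 5×5 matrix whose (i,j) entry (i<j) is ± the wedge of the three variables complementary to {x_{i−1}, x_{j−1}} with alternating signs (−1)^{i+j+1}. -/
import Mathlib

open MvPolynomial ExteriorAlgebra

set_option maxHeartbeats 1000000

variable (k : Type*) [Field k]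

/-- `x_a ∧ x_b ∧ x_c` in the exterior algebra of the space of linear forms. -/
noncomputable def w3 (a b c : Fin 5) : ExteriorAlgebra k (MvPolynomial (Fin 5) k) :=
  ι k (X a) * ι k (X b) * ι k (X c)

/-- The Koszul syzygy matrix `d₂` of the complete intersection `(x₀,…,x₄)`. -/
noncomputable def d2mat : Fin 5 → Fin 10 → MvPolynomial (Fin 5) k :=
  ![![-X 4, 0, 0, 0, -X 3, 0, 0, -X 2, 0, -X 1],
    ![0, -X 4, 0, 0, 0, -X 3, 0, 0, -X 2, X 0],
    ![0, 0, -X 4, 0, 0, 0, -X 3, X 0, X 1, 0],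
    ![0, 0, 0, -X 4, X 0, X 1, X 2, 0, 0, 0],
    ![X 0, X 1, X 2, X 3, 0, 0, 0, 0, 0, 0]]

/-- The symmetric matrix `d₃` of syzygies of `d₂`. -/
noncomputable def d3mat : Fin 10 → Fin 10 → MvPolynomial (Fin 5) k :=
  ![![0, 0, 0, 0, 0, -X 2, X 1, 0, X 3, 0],
    ![0, 0, 0, 0, X 2, 0, -X 0, -X 3, 0, 0],
    ![0, 0, 0, 0, -X 1, X 0, 0, 0, 0, X 3],
    ![0, 0, 0, 0, 0, 0, 0, X 1, -X 0, -X 2],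
    ![0, X 2, -X 1, 0, 0, 0, 0, 0, -X 4, 0],
    ![-X 2, 0, X 0, 0, 0, 0, 0, X 4, 0, 0],
    ![X 1, -X 0, 0, 0, 0, 0, 0, 0, 0, -X 4],
    ![0, -X 3, 0, X 1, 0, X 4, 0, 0, 0, 0],
    ![X 3, 0, 0, -X 0, -X 4, 0, 0, 0, 0, 0],
    ![0, 0, X 3, -X 2, 0, 0, -X 4, 0, 0, 0]]

/-- `d₄ = −d₂ᵗ`. -/
noncomputable def d4mat : Fin 10 → Fin 5 → MvPolynomial (Fin 5) k :=
  fun i j => -d2mat k j i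

section
variable {α : Type*} (x0 x1 x2 x3 x4 : α)
lemma t0 (h : 0 < 10) (y0 y1 y2 y3 y4 y5 y6 y7 y8 y9 : α) :
    ![y0,y1,y2,y3,y4,y5,y6,y7,y8,y9] ⟨0,h⟩ = y0 := rfl
lemma t1 (h : 1 < 10) (y0 y1 y2 y3 y4 y5 y6 y7 y8 y9 : α) :
    ![y0,y1,y2,y3,y4,y5,y6,y7,y8,y9] ⟨1,h⟩ = y1 := rfl
lemma t2 (h : 2 < 10) (y0 y1 y2 y3 y4 y5 y6 y7 y8 y9 : α) :
    ![y0,y1,y2,y3,y4,y5,y6,y7,y8,y9] ⟨2,h⟩ = y2 := rfl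
lemma t3 (h : 3 < 10) (y0 y1 y2 y3 y4 y5 y6 y7 y8 y9 : α) :
    ![y0,y1,y2,y3,y4,y5,y6,y7,y8,y9] ⟨3,h⟩ = y3 := rfl
lemma t4 (h : 4 < 10) (y0 y1 y2 y3 y4 y5 y6 y7 y8 y9 : α) :
    ![y0,y1,y2,y3,y4,y5,y6,y7,y8,y9] ⟨4,h⟩ = y4 := rfl
lemma t5 (h : 5 < 10) (y0 y1 y2 y3 y4 y5 y6 y7 y8 y9 : α) :
    ![y0,y1,y2,y3,y4,y5,y6,y7,y8,y9] ⟨5,h⟩ = y5 := rfl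
lemma t6 (h : 6 < 10) (y0 y1 y2 y3 y4 y5 y6 y7 y8 y9 : α) :
    ![y0,y1,y2,y3,y4,y5,y6,y7,y8,y9] ⟨6,h⟩ = y6 := rfl
lemma t7 (h : 7 < 10) (y0 y1 y2 y3 y4 y5 y6 y7 y8 y9 : α) :
    ![y0,y1,y2,y3,y4,y5,y6,y7,y8,y9] ⟨7,h⟩ = y7 := rfl
lemma t8 (h : 8 < 10) (y0 y1 y2 y3 y4 y5 y6 y7 y8 y9 : α) :
    ![y0,y1,y2,y3,y4,y5,y6,y7,y8,y9] ⟨8,h⟩ = y8 := rfl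
lemma t9 (h : 9 < 10) (y0 y1 y2 y3 y4 y5 y6 y7 y8 y9 : α) :
    ![y0,y1,y2,y3,y4,y5,y6,y7,y8,y9] ⟨9,h⟩ = y9 := rfl
lemma u0 (h : 0 < 5) : ![x0,x1,x2,x3,x4] ⟨0,h⟩ = x0 := rfl
lemma u1 (h : 1 < 5) : ![x0,x1,x2,x3,x4] ⟨1,h⟩ = x1 := rfl
lemma u2 (h : 2 < 5) : ![x0,x1,x2,x3,x4] ⟨2,h⟩ = x2 := rfl
lemma u3 (h : 3 < 5) : ![x0,x1,x2,x3,x4] ⟨3,h⟩ = x3 := rfl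
lemma u4 (h : 4 < 5) : ![x0,x1,x2,x3,x4] ⟨4,h⟩ = x4 := rfl
end

section Abstract

variable {A : Type*} [Ring A] (e : Fin 5 → A)

/-- Abstract version of `d₂` with entries in an arbitrary ring. -/
def D2 : Fin 5 → Fin 10 → A :=
  ![![-e 4, 0, 0, 0, -e 3, 0, 0, -e 2, 0, -e 1],
    ![0, -e 4, 0, 0, 0, -e 3, 0, 0, -e 2, e 0],
    ![0, 0, -e 4, 0, 0, 0, -e 3, e 0, e 1, 0],
    ![0, 0, 0, -e 4, e 0, e 1, e 2, 0, 0, 0],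
    ![e 0, e 1, e 2, e 3, 0, 0, 0, 0, 0, 0]]

/-- Abstract version of `d₃`. -/
def D3 : Fin 10 → Fin 10 → A :=
  ![![0, 0, 0, 0, 0, -e 2, e 1, 0, e 3, 0],
    ![0, 0, 0, 0, e 2, 0, -e 0, -e 3, 0, 0],
    ![0, 0, 0, 0, -e 1, e 0, 0, 0, 0, e 3],
    ![0, 0, 0, 0, 0, 0, 0, e 1, -e 0, -e 2],
    ![0, e 2, -e 1, 0, 0, 0, 0, 0, -e 4, 0],
    ![-e 2, 0, e 0, 0, 0, 0, 0, e 4, 0, 0],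
    ![e 1, -e 0, 0, 0, 0, 0, 0, 0, 0, -e 4],
    ![0, -e 3, 0, e 1, 0, e 4, 0, 0, 0, 0],
    ![e 3, 0, 0, -e 0, -e 4, 0, 0, 0, 0, 0],
    ![0, 0, e 3, -e 2, 0, 0, -e 4, 0, 0, 0]]

variable (hsq : ∀ i, e i * e i = 0) (hsw : ∀ i j, e j * e i = -(e i * e j))
variable (x y z : Fin 5)

include hsw in
lemma P213 : e y * e x * e z = -(e x * e y * e z) := by rw [hsw, neg_mul]
include hsw in
lemma P132 : e x * e z * e y = -(e x * e y * e z) := by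
  rw [mul_assoc, hsw y z, mul_neg, mul_assoc]
include hsw in
lemma P231 : e y * e z * e x = e x * e y * e z := by
  rw [P132 e hsw y x z, P213 e hsw, neg_neg]
include hsw in
lemma P312 : e z * e x * e y = e x * e y * e z := by
  rw [P213 e hsw x z y, P132 e hsw, neg_neg]
include hsw in
lemma P321 : e z * e y * e x = -(e x * e y * e z) := by
  rw [P213 e hsw y z x, P231 e hsw]
include hsq in
lemma Q1 (w : A) : e x * e x * w = 0 := by rw [hsq, zero_mul]
include hsq hsw in
lemma Q2 : e x * e y * e x = 0 := by rw [P132 e hsw x x y, Q1 e hsq, neg_zero]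
include hsq in
lemma Q3 (w : A) : w * e x * e x = 0 := by rw [mul_assoc, hsq, mul_zero]

include hsq hsw in
lemma abstract_D4 : ∀ i j, (∑ a : Fin 10, ∑ b : Fin 10,
      D2 e i a * D3 e a b * -(D2 e j b))
    = (6 : ℤ) •
      (![![0, e 2 * e 3 * e 4, -(e 1 * e 3 * e 4), e 1 * e 2 * e 4, -(e 1 * e 2 * e 3)],
         ![-(e 2 * e 3 * e 4), 0, e 0 * e 3 * e 4, -(e 0 * e 2 * e 4), e 0 * e 2 * e 3],
         ![e 1 * e 3 * e 4, -(e 0 * e 3 * e 4), 0, e 0 * e 1 * e 4, -(e 0 * e 1 * e 3)],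
         ![-(e 1 * e 2 * e 4), e 0 * e 2 * e 4, -(e 0 * e 1 * e 4), 0, e 0 * e 1 * e 2],
         ![e 1 * e 2 * e 3, -(e 0 * e 2 * e 3), e 0 * e 1 * e 3, -(e 0 * e 1 * e 2), 0]] i j) := by
  intro i j
  fin_cases i <;> fin_cases j <;>
  · simp only [D2, D3, Fin.sum_univ_succ, Fin.sum_univ_zero, Fin.isValue,
      Matrix.cons_val_zero, Matrix.cons_val_succ, u0, u1, u2, u3, u4,
      neg_mul, mul_neg, zero_mul, mul_zero, neg_zero, neg_neg, add_zero, zero_add, smul_zero]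
    all_goals simp only [Q1 e hsq, Q2 e hsq hsw, Q3 e hsq,
      P213 e hsw 0 1 2, P132 e hsw 0 1 2, P231 e hsw 0 1 2, P312 e hsw 0 1 2, P321 e hsw 0 1 2,
      P213 e hsw 0 1 3, P132 e hsw 0 1 3, P231 e hsw 0 1 3, P312 e hsw 0 1 3, P321 e hsw 0 1 3,
      P213 e hsw 0 1 4, P132 e hsw 0 1 4, P231 e hsw 0 1 4, P312 e hsw 0 1 4, P321 e hsw 0 1 4,
      P213 e hsw 0 2 3, P132 e hsw 0 2 3, P231 e hsw 0 2 3, P312 e hsw 0 2 3, P321 e hsw 0 2 3,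
      P213 e hsw 0 2 4, P132 e hsw 0 2 4, P231 e hsw 0 2 4, P312 e hsw 0 2 4, P321 e hsw 0 2 4,
      P213 e hsw 0 3 4, P132 e hsw 0 3 4, P231 e hsw 0 3 4, P312 e hsw 0 3 4, P321 e hsw 0 3 4,
      P213 e hsw 1 2 3, P132 e hsw 1 2 3, P231 e hsw 1 2 3, P312 e hsw 1 2 3, P321 e hsw 1 2 3,
      P213 e hsw 1 2 4, P132 e hsw 1 2 4, P231 e hsw 1 2 4, P312 e hsw 1 2 4, P321 e hsw 1 2 4,
      P213 e hsw 1 3 4, P132 e hsw 1 3 4, P231 e hsw 1 3 4, P312 e hsw 1 3 4, P321 e hsw 1 3 4,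
      P213 e hsw 2 3 4, P132 e hsw 2 3 4, P231 e hsw 2 3 4, P312 e hsw 2 3 4, P321 e hsw 2 3 4,
      neg_neg]
    all_goals first
    | rfl
    | abel

end Abstract

/-- The images of the variables in the exterior algebra. -/
noncomputable def Emap : Fin 5 → ExteriorAlgebra k (MvPolynomial (Fin 5) k) :=
  fun t => ι k (X t)

lemma Emap_sq : ∀ t, Emap k t * Emap k t = 0 := fun t => ι_sq_zero _

lemma Emap_sw : ∀ t s, Emap k s * Emap k t = -(Emap k t * Emap k s) := by
  intro t s
  rw [eq_neg_iff_add_eq_zero, add_comm]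
  exact ι_add_mul_swap _ _

lemma hd2 : ∀ i a, ι k (d2mat k i a) = D2 (Emap k) i a := by
  intro i a
  fin_cases i <;> fin_cases a <;>
    simp only [d2mat, D2, Emap, u0, u1, u2, u3, u4, t0, t1, t2, t3, t4, t5, t6, t7, t8, t9,
      map_neg, map_zero]

lemma hd3 : ∀ a b, ι k (d3mat k a b) = D3 (Emap k) a b := by
  intro a b
  fin_cases a <;> fin_cases b <;>
    simp only [d3mat, D3, Emap, u0, u1, u2, u3, u4, t0, t1, t2, t3, t4, t5, t6, t7, t8, t9,
      map_neg, map_zero]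

lemma hd4 : ∀ b j, ι k (d4mat k b j) = -(D2 (Emap k) j b) := by
  intro b j
  rw [d4mat, map_neg, hd2]

/-- The wedge composition `D₄ = d₂ ∧ d₃ ∧ d₄` of the Koszul syzygy matrices of the
complete intersection `(x₀,…,x₄)` equals `6` times the skew-symmetric `5 × 5` matrix of
signed complementary triple wedges. -/
theorem wedge_composition_koszul_D4 :
    ∀ i j, (∑ a : Fin 10, ∑ b : Fin 10,
        ι k (d2mat k i a) * ι k (d3mat k a b) * ι k (d4mat k b j))
      = (6 : ℤ) •
        (![![0, w3 k 2 3 4, -w3 k 1 3 4, w3 k 1 2 4, -w3 k 1 2 3],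
           ![-w3 k 2 3 4, 0, w3 k 0 3 4, -w3 k 0 2 4, w3 k 0 2 3],
           ![w3 k 1 3 4, -w3 k 0 3 4, 0, w3 k 0 1 4, -w3 k 0 1 3],
           ![-w3 k 1 2 4, w3 k 0 2 4, -w3 k 0 1 4, 0, w3 k 0 1 2],
           ![w3 k 1 2 3, -w3 k 0 2 3, w3 k 0 1 3, -w3 k 0 1 2, 0]] i j) := by
  intro i j
  simp only [hd2 k, hd3 k, hd4 k]
  exact abstract_D4 (Emap k) (Emap_sq k) (Emap_sw k) i j
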